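/- Let Y be a compact metric space and φ : Y × ℝⁿ → ℝ be such that for every y ∈ Y the function x ↦ φ(y,x) is convex and differentiable, and for every x ∈ ℝⁿ the function y ↦ φ(y,x) is upper semicontinuous. Define Φ(x) = sup_{y ∈ Y} φ(y,x) and assume Φ is finite in a neighborhood of a point x. If the function y ↦ φ(y,x) attains its maximum over Y at a unique point y(x) ∈ Y, then Φ is differentiable at x and ∇Φ(x) = ∇_x φ(y(x), x). -/

import Mathlib

open scoped RealInnerProductSpace
open Filter Metric Set Topology

lemma usc_exists_max {Y : Type*} [TopologicalSpace Y] [CompactSpace Y] [Nonempty Y]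
    {f : Y → ℝ} (hf : UpperSemicontinuous f) : ∃ y₀, ∀ y, f y ≤ f y₀ := by
  by_contra h
  push_neg at h
  obtain ⟨t, ht⟩ := isCompact_univ.elim_finite_subcover (fun y : Y => {z | f z < f y})
    (fun y => hf.isOpen_preimage (f y)) (fun z _ => by
      obtain ⟨y, hy⟩ := h z
      exact mem_iUnion.2 ⟨y, hy⟩)
  have htne : t.Nonempty := by
    obtain ⟨z⟩ := ‹Nonempty Y›
    obtain ⟨y, hy, _⟩ := mem_iUnion₂.1 (ht (mem_univ z))
    exact ⟨y, hy⟩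
  obtain ⟨b, hbt, hb⟩ := t.exists_max_image f htne
  obtain ⟨y, hyt, hby⟩ := mem_iUnion₂.1 (ht (mem_univ b))
  exact absurd (hb y hyt) (not_le.2 hby)

lemma grad_ineq {F : Type*} [NormedAddCommGroup F] [InnerProductSpace ℝ F]
    [CompleteSpace F] {ψ : F → ℝ} (hc : ConvexOn ℝ Set.univ ψ) (hd : Differentiable ℝ ψ)
    (a b : F) : ψ a + ⟪gradient ψ a, b - a⟫ ≤ ψ b := by
  have hline : ConvexOn ℝ Set.univ (ψ ∘ (AffineMap.lineMap a b : ℝ →ᵃ[ℝ] F)) := by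
    simpa using hc.comp_affineMap (AffineMap.lineMap a b : ℝ →ᵃ[ℝ] F)
  have hψ : HasFDerivAt ψ (InnerProductSpace.toDual ℝ F (gradient ψ a))
      ((AffineMap.lineMap a b : ℝ →ᵃ[ℝ] F) 0) := by
    simpa using ((hd a).hasGradientAt).hasFDerivAt
  have hc' : HasDerivAt (fun t : ℝ => (AffineMap.lineMap a b : ℝ →ᵃ[ℝ] F) t) (b - a) 0 := by
    simp only [AffineMap.lineMap_apply_module]
    have : HasDerivAt (fun t : ℝ => a + t • (b - a)) (b - a) 0 := by
      simpa using (((hasDerivAt_id (0:ℝ)).const_mul (1:ℝ)).smul_const (b - a)).const_add a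
    convert this using 2 with t
    module
  have hderiv : HasDerivAt (ψ ∘ (AffineMap.lineMap a b : ℝ →ᵃ[ℝ] F))
      ⟪gradient ψ a, b - a⟫ 0 := by
    simpa [InnerProductSpace.toDual_apply_apply] using hψ.comp_hasDerivAt 0 hc'
  have hs := hline.le_slope_of_hasDerivAt (mem_univ (0:ℝ)) (mem_univ 1) one_pos hderiv
  simp only [slope_def_field, Function.comp_apply, AffineMap.lineMap_apply_zero,
    AffineMap.lineMap_apply_one] at hs
  -- hs : ⟪gradient ψ a, b - a⟫ ≤ (ψ b - ψ a) / (1 - 0)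
  simp only [sub_zero, div_one] at hs
  linarith

set_option maxHeartbeats 1000000 in
/-- Corollary 2. If moreover, at the point `x`, the upper semicontinuous
function `y ↦ φ y x` attains its maximum over the compact set `Y` at a *unique* point
`y₀ = y(x)`, then `Φ = sup_y φ y ·` is differentiable at `x` with
`∇Φ(x) = ∇ₓ φ(y(x), x)`. -/
theorem sup_convex_differentiable_of_unique_maximizer
    {n : ℕ} {Y : Type*} [MetricSpace Y] [CompactSpace Y] [Nonempty Y]
    (φ : Y → EuclideanSpace ℝ (Fin n) → ℝ)
    (hconv : ∀ y, ConvexOn ℝ Set.univ (φ y))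
    (hdiff : ∀ y, Differentiable ℝ (φ y))
    (husc : ∀ x, UpperSemicontinuous fun y => φ y x)
    (Φ : EuclideanSpace ℝ (Fin n) → ℝ)
    (hΦ : ∀ x, Φ x = ⨆ y, φ y x)
    (x : EuclideanSpace ℝ (Fin n))
    (hfin : ∀ᶠ z in nhds x, BddAbove (Set.range fun y => φ y z))
    (y₀ : Y)
    (hy₀max : ∀ y, φ y x ≤ φ y₀ x)
    (hy₀uniq : ∀ y, φ y x = φ y₀ x → y = y₀) :
    HasGradientAt Φ (gradient (φ y₀) x) x := by
  classical
  set g := gradient (φ y₀) x with hg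
  -- maximizers everywhere
  have hmax : ∀ z : EuclideanSpace ℝ (Fin n), ∃ w : Y, ∀ y, φ y z ≤ φ w z := fun z => usc_exists_max (husc z)
  choose ym hym using hmax
  have hbdd : ∀ z : EuclideanSpace ℝ (Fin n), BddAbove (Set.range fun y => φ y z) := fun z =>
    ⟨φ (ym z) z, by rintro _ ⟨y, rfl⟩; exact hym z y⟩
  have hΦattain : ∀ z : EuclideanSpace ℝ (Fin n), Φ z = φ (ym z) z := fun z => by
    rw [hΦ z]
    exact le_antisymm (ciSup_le (hym z)) (le_ciSup (hbdd z) (ym z))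
  have hφleΦ : ∀ (y : Y) (z : EuclideanSpace ℝ (Fin n)), φ y z ≤ Φ z := fun y z => (hΦattain z) ▸ hym z y
  have hΦx : Φ x = φ y₀ x := by
    rw [hΦ x]
    exact le_antisymm (ciSup_le hy₀max) (le_ciSup (hbdd x) y₀)
  -- Φ is convex
  have hΦconv : ConvexOn ℝ Set.univ Φ := by
    refine ⟨convex_univ, fun z₁ _ z₂ _ a b ha hb hab => ?_⟩
    rw [hΦ (a • z₁ + b • z₂)]
    refine ciSup_le fun y => ?_
    calc φ y (a • z₁ + b • z₂) ≤ a • φ y z₁ + b • φ y z₂ :=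
          (hconv y).2 (mem_univ z₁) (mem_univ z₂) ha hb hab
    _ ≤ a • Φ z₁ + b • Φ z₂ := by
        simp only [smul_eq_mul]
        gcongr <;> [exact hφleΦ y z₁; exact hφleΦ y z₂]
  have hΦcont : Continuous Φ := by
    rw [← continuousOn_univ]
    exact ConvexOn.continuousOn isOpen_univ hΦconv
  -- lower bound
  have hlow : ∀ z : EuclideanSpace ℝ (Fin n), Φ x + ⟪g, z - x⟫ ≤ Φ z := fun z => by
    have h1 := grad_ineq (hconv y₀) (hdiff y₀) x z
    have h2 := hφleΦ y₀ z
    rw [hΦx]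
    exact le_trans h1 h2
  -- upper bound
  have hup : ∀ ε > (0:ℝ), ∀ᶠ z in nhds x, Φ z - Φ x - ⟪g, z - x⟫ ≤ ε * ‖z - x‖ := by
    intro ε hε
    by_contra hcon
    rw [Filter.not_eventually] at hcon
    obtain ⟨u, hu_tend, hu⟩ := Filter.exists_seq_forall_of_frequently hcon
    simp only [not_le] at hu
    have hune : ∀ k, u k ≠ x := by
      intro k hk
      have h := hu k
      rw [hk] at h
      simp at h
    obtain ⟨yb, σ, hσ, hYt⟩ := CompactSpace.tendsto_subseq (fun k => ym (u k))
    set V : ℕ → EuclideanSpace ℝ (Fin n) := fun k => u (σ k) with hV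
    have hVt : Filter.Tendsto V Filter.atTop (nhds x) := hu_tend.comp hσ.tendsto_atTop
    have hVne : ∀ k, V k ≠ x := fun k => hune (σ k)
    have hVlt : ∀ k, ε * ‖V k - x‖ < Φ (V k) - Φ x - ⟪g, V k - x⟫ := fun k => hu (σ k)
    -- Step A : the values of φ at the maximizers converge to Φ x
    have hA : Filter.Tendsto (fun k => φ (ym (V k)) x) Filter.atTop (nhds (Φ x)) := by
      have hrefl : Filter.Tendsto (fun k => (2:ℝ) • V k - x) Filter.atTop (nhds x) := by
        have h2 : Filter.Tendsto (fun k => (2:ℝ) • V k - x) Filter.atTop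
            (nhds ((2:ℝ) • x - x)) := (hVt.const_smul (2:ℝ)).sub tendsto_const_nhds
        have h3 : (2:ℝ) • x - x = x := by module
        rwa [h3] at h2
      have hlowk : ∀ k, 2 * Φ (V k) - Φ ((2:ℝ) • V k - x) ≤ φ (ym (V k)) x := by
        intro k
        have hmid : V k = (1/2 : ℝ) • x + (1/2 : ℝ) • ((2:ℝ) • V k - x) := by module
        have h1 := (hconv (ym (V k))).2 (Set.mem_univ x)
          (Set.mem_univ ((2:ℝ) • V k - x))
          (by norm_num : (0:ℝ) ≤ 1/2) (by norm_num : (0:ℝ) ≤ 1/2) (by norm_num)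
        rw [← hmid] at h1
        have h2 := hφleΦ (ym (V k)) ((2:ℝ) • V k - x)
        have h3 := hΦattain (V k)
        simp only [smul_eq_mul] at h1
        linarith
      have hlt : Filter.Tendsto (fun k => 2 * Φ (V k) - Φ ((2:ℝ) • V k - x))
          Filter.atTop (nhds (Φ x)) := by
        have h4 := ((hΦcont.continuousAt.tendsto.comp hVt).const_mul 2).sub
          (hΦcont.continuousAt.tendsto.comp hrefl)
        have h5 : 2 * Φ x - Φ x = Φ x := by ring
        simpa [Function.comp, h5] using h4
      exact tendsto_of_tendsto_of_tendsto_of_le_of_le hlt tendsto_const_nhds hlowk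
        (fun k => hφleΦ _ x)
    -- Step B : the limit of maximizers is y₀
    have hyb : yb = y₀ := by
      have hge : Φ x ≤ φ yb x := by
        by_contra hlt
        push_neg at hlt
        have husc' := husc x yb ((φ yb x + Φ x)/2) (by linarith)
        have hev : ∀ᶠ k in Filter.atTop, φ (ym (V k)) x ≤ (φ yb x + Φ x)/2 := by
          have := hYt.eventually husc'
          simp only [Function.comp] at this
          exact this.mono fun k hk => hk.le
        have := le_of_tendsto hA hev
        linarith
      exact hy₀uniq yb (le_antisymm (hy₀max yb) (hΦx ▸ hge))
    subst hyb
    have hYt' : Filter.Tendsto (fun k => ym (V k)) Filter.atTop (nhds yb) := by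
      exact hYt
    -- Step C : choose the scale s from differentiability of φ yb at x
    have hlittle := ((hdiff yb x).hasGradientAt).hasFDerivAt
    rw [hasFDerivAt_iff_isLittleO] at hlittle
    have hev := (Asymptotics.isLittleO_iff.1 hlittle) (show (0:ℝ) < ε/4 by linarith)
    rw [Metric.eventually_nhds_iff] at hev
    obtain ⟨δ, hδ, hδprop⟩ := hev
    set s := δ/2 with hs
    have hs0 : 0 < s := by positivity
    have hCb : ∀ w : EuclideanSpace ℝ (Fin n), ‖w - x‖ ≤ s →
        φ yb w - φ yb x - ⟪g, w - x⟫ ≤ (ε/4) * ‖w - x‖ := by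
      intro w hw
      have hd1 : dist w x < δ := by rw [dist_eq_norm]; rw [hs] at hw; linarith
      have hd2 := hδprop hd1
      simp only [InnerProductSpace.toDual_apply_apply, Real.norm_eq_abs] at hd2
      have := (abs_le.1 hd2).2
      linarith
    -- the rescaled points on the sphere of radius s
    set W : ℕ → EuclideanSpace ℝ (Fin n) := fun k => x + (s / ‖V k - x‖) • (V k - x) with hW
    have hWsub : ∀ k, W k - x = (s / ‖V k - x‖) • (V k - x) := fun k => by
      simp [hW]
    have hnne : ∀ k, ‖V k - x‖ ≠ 0 := fun k => by
      simpa [sub_eq_zero] using hVne k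
    have hnpos : ∀ k, 0 < ‖V k - x‖ := fun k => lt_of_le_of_ne (norm_nonneg _) (Ne.symm (hnne k))
    have hWnorm : ∀ k, ‖W k - x‖ = s := by
      intro k
      rw [hWsub k, norm_smul, Real.norm_eq_abs, abs_div, abs_of_nonneg hs0.le,
        abs_of_nonneg (norm_nonneg _)]
      field_simp
      rw [div_self (hnne k)]
    have hWsphere : ∀ k, W k ∈ Metric.sphere x s := fun k => by
      rw [mem_sphere_iff_norm]; exact hWnorm k
    obtain ⟨wb, hwb, τ, hτ, hWt⟩ := (isCompact_sphere x s).tendsto_subseq hWsphere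
    have hwbn : ‖wb - x‖ = s := mem_sphere_iff_norm.1 hwb
    -- key rescaled inequality
    have key : ∀ k, ‖V k - x‖ ≤ s →
        ε * s < φ (ym (V k)) (W k) - φ (ym (V k)) x - ⟪g, W k - x⟫ := by
      intro k hks
      have ht0 : 0 < ‖V k - x‖ := hnpos k
      set t := ‖V k - x‖ with htdef
      have hts1 : t / s * (s / t) = 1 := by field_simp
      have hVsub : V k - x = (t/s) • (W k - x) := by
        rw [hWsub k, smul_smul, hts1, one_smul]
      have hVcomb : V k = (1 - t/s) • x + (t/s) • W k := by
        have : V k = x + (t/s) • (W k - x) := by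
          rw [← hVsub]; module
        rw [this]; module
      have hca : (0:ℝ) ≤ 1 - t/s := sub_nonneg.2 (div_le_one_of_le₀ hks hs0.le)
      have hcb : (0:ℝ) ≤ t/s := by positivity
      have hcab : (1 - t/s) + (t/s) = 1 := by ring
      have hcomb := (hconv (ym (V k))).2 (Set.mem_univ x) (Set.mem_univ (W k)) hca hcb hcab
      rw [← hVcomb] at hcomb
      simp only [smul_eq_mul] at hcomb
      have hinner : ⟪g, V k - x⟫ = (t/s) * ⟪g, W k - x⟫ := by
        rw [hVsub, real_inner_smul_right]
      have hlt := hVlt k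
      rw [hΦattain (V k), hinner] at hlt
      have hφx := hφleΦ (ym (V k)) x
      have hstep : ε * t < (t/s) *
          (φ (ym (V k)) (W k) - φ (ym (V k)) x - ⟪g, W k - x⟫) := by
        nlinarith [hcomb, hlt, hφx]
      have hmul := mul_lt_mul_of_pos_left hstep (show (0:ℝ) < s/t by positivity)
      calc ε * s = (s/t) * (ε * t) := by field_simp
        _ < (s/t) * ((t/s) * (φ (ym (V k)) (W k) - φ (ym (V k)) x - ⟪g, W k - x⟫)) := hmul
        _ = φ (ym (V k)) (W k) - φ (ym (V k)) x - ⟪g, W k - x⟫ := by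
            rw [← mul_assoc]
            have : s/t * (t/s) = 1 := by field_simp
            rw [this, one_mul]
    -- uniform bound M on the closed ball of radius 3s
    obtain ⟨zM, hzM, hM⟩ := (isCompact_closedBall x (3*s)).exists_isMaxOn
      ⟨x, Metric.mem_closedBall_self (by positivity)⟩ hΦcont.continuousOn
    set M := Φ zM with hMdef
    have hMb : ∀ (y : Y) (w : EuclideanSpace ℝ (Fin n)), dist w x ≤ 3*s → φ y w ≤ M :=
      fun y w hw => (hφleΦ y w).trans (hM (Metric.mem_closedBall.2 hw))
    set m : ℝ := 2*(Φ x - 1) - M with hmdef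
    set C : ℝ := max |M| |m| with hCdef
    have hCpos : 0 ≤ C := le_trans (abs_nonneg M) (le_max_left _ _)
    have lowb : ∀ y : Y, Φ x - 1 ≤ φ y x → ∀ a : EuclideanSpace ℝ (Fin n),
        dist a x < 3*s → |φ y a| ≤ C := by
      intro y hy a ha
      have h1 : φ y a ≤ M := hMb y a ha.le
      have hreflmem : dist ((2:ℝ) • x - a) x ≤ 3*s := by
        have he : (2:ℝ) • x - a - x = x - a := by module
        rw [dist_eq_norm, he, norm_sub_rev, ← dist_eq_norm]
        exact ha.le
      have h2 : φ y ((2:ℝ) • x - a) ≤ M := hMb y _ hreflmem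
      have hmid : x = (1/2 : ℝ) • a + (1/2 : ℝ) • ((2:ℝ) • x - a) := by module
      have h3 := (hconv y).2 (Set.mem_univ a) (Set.mem_univ ((2:ℝ) • x - a))
        (by norm_num : (0:ℝ) ≤ 1/2) (by norm_num : (0:ℝ) ≤ 1/2) (by norm_num)
      rw [← hmid] at h3
      simp only [smul_eq_mul] at h3
      have h4 : m ≤ φ y a := by rw [hmdef]; linarith
      rw [abs_le]
      constructor
      · have := neg_abs_le m
        have h5 : |m| ≤ C := le_max_right _ _
        linarith
      · have := le_abs_self M
        have h5 : |M| ≤ C := le_max_left _ _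
        linarith
    have hlipY : ∀ y : Y, Φ x - 1 ≤ φ y x →
        LipschitzOnWith (2*C/s).toNNReal (φ y) (Metric.ball x (2*s)) := by
      intro y hy
      have := ConvexOn.lipschitzOnWith_of_abs_le
        ((hconv y).subset (Set.subset_univ _) (convex_ball x (3*s))) hs0 (lowb y hy)
      rwa [show 3*s - s = 2*s from by ring] at this
    -- pass to the second subsequence and collect eventual bounds
    have hτat : Filter.Tendsto τ Filter.atTop Filter.atTop := hτ.tendsto_atTop
    have hball : ∀ᶠ w in nhds x, ‖w - x‖ ≤ s := by
      filter_upwards [Metric.ball_mem_nhds x hs0] with w hw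
      exact (mem_ball_iff_norm.1 hw).le
    have e1 : ∀ᶠ j in Filter.atTop, ‖V (τ j) - x‖ ≤ s :=
      hτat.eventually (hVt.eventually hball)
    have e2a : ∀ᶠ j in Filter.atTop, Φ x - 1 < φ (ym (V (τ j))) x :=
      hτat.eventually (hA.eventually (eventually_gt_nhds (by linarith)))
    have e2b : ∀ᶠ j in Filter.atTop, Φ x - ε*s/8 < φ (ym (V (τ j))) x :=
      hτat.eventually (hA.eventually (eventually_gt_nhds
        (by nlinarith : Φ x - ε*s/8 < Φ x)))
    have e3 : ∀ᶠ j in Filter.atTop, φ (ym (V (τ j))) wb < φ yb wb + ε*s/8 := by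
      have husc' := husc wb yb (φ yb wb + ε*s/8) (by nlinarith)
      exact hτat.eventually (hYt'.eventually husc')
    have hWτ : Filter.Tendsto (fun j => W (τ j)) Filter.atTop (nhds wb) := hWt
    have e4 : ∀ᶠ j in Filter.atTop, ⟪g, wb - x⟫ - ε*s/8 < ⟪g, W (τ j) - x⟫ := by
      have hct : Filter.Tendsto (fun j => ⟪g, W (τ j) - x⟫) Filter.atTop
          (nhds ⟪g, wb - x⟫) := by
        have hcont : Continuous fun w : EuclideanSpace ℝ (Fin n) => ⟪g, w - x⟫ :=
          continuous_const.inner (continuous_id.sub continuous_const)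
        exact (hcont.tendsto wb).comp hWτ
      exact hct.eventually (eventually_gt_nhds (by nlinarith))
    have e5 : ∀ᶠ j in Filter.atTop,
        ((2*C/s).toNNReal : ℝ) * dist (W (τ j)) wb ≤ ε*s/8 := by
      have hd0 : Filter.Tendsto (fun j => dist (W (τ j)) wb) Filter.atTop (nhds 0) :=
        tendsto_iff_dist_tendsto_zero.1 hWτ
      have hK : Filter.Tendsto (fun j => ((2*C/s).toNNReal : ℝ) * dist (W (τ j)) wb)
          Filter.atTop (nhds (((2*C/s).toNNReal : ℝ) * 0)) := hd0.const_mul _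
      rw [mul_zero] at hK
      exact hK.eventually (eventually_le_nhds (by nlinarith))
    obtain ⟨j, h1, h2a, h2b, h3, h4, h5⟩ :=
      (e1.and (e2a.and (e2b.and (e3.and (e4.and e5))))).exists
    -- final contradiction
    have hkey := key (τ j) h1
    have hlip := hlipY (ym (V (τ j))) h2a.le
    have hmem1 : W (τ j) ∈ Metric.ball x (2*s) := by
      rw [Metric.mem_ball, dist_eq_norm, hWnorm (τ j)]; linarith
    have hmem2 : wb ∈ Metric.ball x (2*s) := by
      rw [Metric.mem_ball, dist_eq_norm, hwbn]; linarith
    have hdle := hlip.dist_le_mul (W (τ j)) hmem1 wb hmem2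
    rw [Real.dist_eq] at hdle
    have habs : φ (ym (V (τ j))) (W (τ j)) ≤ φ (ym (V (τ j))) wb + ε*s/8 := by
      have := (abs_le.1 hdle).2
      linarith
    have hCw := hCb wb (le_of_eq hwbn)
    rw [hwbn] at hCw
    have hεs : 0 < ε * s := mul_pos hε hs0
    rw [hΦx] at h2b
    linarith
  -- conclusion
  rw [hasGradientAt_iff_hasFDerivAt, hasFDerivAt_iff_isLittleO, Asymptotics.isLittleO_iff]
  intro c hc
  filter_upwards [hup c hc] with z hz
  have h1 := hlow z
  rw [Real.norm_eq_abs, abs_le]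
  constructor
  · have : (0:ℝ) ≤ c * ‖z - x‖ := by positivity
    simp only [InnerProductSpace.toDual_apply_apply]
    linarith
  · simpa only [InnerProductSpace.toDual_apply_apply] using hz
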